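/- Let M be an infinite uniformly discrete pointed metric space containing a sequence of distinct points {pₙ} with (i) d(pₙ, 0) = R(pₙ) for all n, (ii) the sequence d(pₙ, 0) is decreasing and converges to some D > 0, and (iii) 2D ≤ d(pₙ, pₘ) for all n ≠ m. Then PNA(M) contains an isometric copy of c₀: with {rₙ} the primes in increasing order, the functions fₙ taking value D at each point p_{rₙ^m} (m ∈ ℕ) and 0 elsewhere are isometrically equivalent to the c₀-basis, and each ℓ∞-bounded c₀-combination Σ aₙ fₙ attains its pointwise norm at 0 with norm sup |aₙ|. -/

import Mathlib

open Filter Metric MeasureTheory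

noncomputable def lipNorm {M : Type*} [MetricSpace M] (f : M → ℝ) : ℝ :=
  sSup {r : ℝ | ∃ p q : M, p ≠ q ∧ r = |f q - f p| / dist p q}

noncomputable def pnormAt {M : Type*} [MetricSpace M] (f : M → ℝ) (p : M) : ℝ :=
  sSup {r : ℝ | ∃ q : M, q ≠ p ∧ r = |f q - f p| / dist p q}

/-- `f` strongly attains its (Lipschitz) norm. -/
def StronglyAttains {M : Type*} [MetricSpace M] (f : M → ℝ) : Prop :=
  ∃ p q : M, p ≠ q ∧ |f q - f p| / dist p q = lipNorm f

/-- `f` attains its pointwise norm. -/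
def PointwiseAttains {M : Type*} [MetricSpace M] (f : M → ℝ) : Prop :=
  ∃ p : M, pnormAt f p = lipNorm f

/-- under (i)–(iii), the prime-power indexed functions
fₙ = D·1_{ {p_{rₙ^m} : m ≥ 1} } form an isometric c₀-basis in PNA(M), every nonzero
c₀-combination attaining its pointwise norm at the base point z with norm sup|aₙ|. -/
theorem stmt15 {M : Type*} [MetricSpace M] [Infinite M] (z : M)
    (hud : ∃ δ > (0:ℝ), ∀ p q : M, p ≠ q → δ ≤ dist p q)
    (p : ℕ → M) (hinj : Function.Injective p)
    (D : ℝ) (hD : 0 < D)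
    (hR : ∀ n, ∀ x : M, x ≠ p n → dist (p n) z ≤ dist (p n) x)
    (hanti : ∀ n m : ℕ, n ≤ m → dist (p m) z ≤ dist (p n) z)
    (hlim : Tendsto (fun n => dist (p n) z) atTop (nhds D))
    (hsep : ∀ n m, n ≠ m → 2 * D ≤ dist (p n) (p m)) :
    ∀ a : ℕ → ℝ, Tendsto a atTop (nhds 0) → a ≠ 0 →
      ∀ F : M → ℝ,
        (∀ x : M, F x = ∑' n, a n *
          ({y : M | ∃ m : ℕ, 1 ≤ m ∧ y = p (Nat.nth Nat.Prime n ^ m)} : Set M).indicator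
            (fun _ => D) x) →
        (∀ x : M, Summable fun n => a n *
          ({y : M | ∃ m : ℕ, 1 ≤ m ∧ y = p (Nat.nth Nat.Prime n ^ m)} : Set M).indicator
            (fun _ => D) x) ∧
        lipNorm F = (⨆ n, |a n|) ∧ pnormAt F z = lipNorm F := by
  classical
  intro a ha ha0 F hF
  set r : ℕ → ℕ := fun n => Nat.nth Nat.Prime n with hrdef
  set S : ℕ → Set M := fun n =>
    {y : M | ∃ m : ℕ, 1 ≤ m ∧ y = p (Nat.nth Nat.Prime n ^ m)} with hSdef
  have hrprime : ∀ n, (r n).Prime := fun n => Nat.prime_nth_prime n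
  have hrinj : Function.Injective r := Nat.nth_injective Nat.infinite_setOf_prime
  -- disjointness of the sets S n
  have hdisj : ∀ (x : M) (n n' : ℕ), x ∈ S n → x ∈ S n' → n = n' := by
    rintro x n n' ⟨m, hm, rfl⟩ ⟨m', hm', hx⟩
    have hpow : r n ^ m = r n' ^ m' := hinj hx
    have h1 : r n ∣ r n' ^ m' := hpow ▸ dvd_pow_self (r n) (by omega)
    have h2 : r n ∣ r n' := (hrprime n).dvd_of_dvd_pow h1
    exact hrinj ((Nat.prime_dvd_prime_iff_eq (hrprime n) (hrprime n')).mp h2)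
  -- basic distance facts
  have hDk : ∀ k, D ≤ dist (p k) z := fun k =>
    le_of_tendsto hlim (eventually_atTop.2 ⟨k, fun m hm => hanti k m hm⟩)
  have hz : ∀ k, p k ≠ z := by
    intro k h
    have := hDk k
    rw [h, dist_self] at this
    linarith
  -- evaluation of F
  have hFval : ∀ (n : ℕ) (x : M), x ∈ S n → F x = a n * D := by
    intro n x hx
    rw [hF x, tsum_eq_single n]
    · rw [Set.indicator_of_mem hx]
    · intro n' hne
      have hnx : x ∉ S n' := fun h => hne (hdisj x n' n h hx)
      rw [Set.indicator_of_notMem hnx, mul_zero]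
  have hF0 : ∀ x : M, (∀ n, x ∉ S n) → F x = 0 := by
    intro x hx
    rw [hF x]
    have : ∀ n : ℕ, a n * (S n).indicator (fun _ => D) x = 0 := by
      intro n; rw [Set.indicator_of_notMem (hx n), mul_zero]
    exact (tsum_congr this).trans tsum_zero
  have hFzz : F z = 0 := by
    refine hF0 z fun n hn => ?_
    obtain ⟨m, hm, h⟩ := hn
    exact hz _ h.symm
  -- characterization of values of F
  have hchar : ∀ x : M, F x = 0 ∨ ∃ n k, x = p k ∧ F x = a n * D := by
    intro x
    by_cases hx : ∃ n, x ∈ S n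
    · obtain ⟨n, m, hm, hxe⟩ := hx
      exact Or.inr ⟨n, r n ^ m, hxe, hFval n x ⟨m, hm, hxe⟩⟩
    · exact Or.inl (hF0 x (fun n hn => hx ⟨n, hn⟩))
  -- summability
  have hsum : ∀ x : M, Summable fun n => a n * (S n).indicator (fun _ => D) x := by
    intro x
    by_cases hx : ∃ n, x ∈ S n
    · obtain ⟨n₀, hn₀⟩ := hx
      refine summable_of_ne_finset_zero (s := {n₀}) ?_
      intro n hn
      have hnx : x ∉ S n := fun h => (Finset.notMem_singleton.mp hn) (hdisj x n n₀ h hn₀)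
      rw [Set.indicator_of_notMem hnx, mul_zero]
    · refine summable_of_ne_finset_zero (s := ∅) ?_
      intro n _
      have hnx : x ∉ S n := fun h => hx ⟨n, h⟩
      rw [Set.indicator_of_notMem hnx, mul_zero]
  -- the sup of |a n|
  set A : ℝ := ⨆ n, |a n| with hAdef
  have hbdd : BddAbove (Set.range fun n => |a n|) := by
    have : Tendsto (fun n => |a n|) atTop (nhds 0) := by
      simpa using ha.abs
    exact this.bddAbove_range
  have hAle : ∀ n, |a n| ≤ A := fun n => le_ciSup hbdd n
  have hA0 : 0 ≤ A := le_trans (abs_nonneg _) (hAle 0)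
  -- Lipschitz bound
  have hLip : ∀ x y : M, x ≠ y → |F y - F x| ≤ A * dist x y := by
    intro x y hxy
    rcases hchar x with hx | ⟨n, k, rfl, hvx⟩
    · rcases hchar y with hy | ⟨n', k', rfl, hvy⟩
      · simp [hx, hy, mul_nonneg hA0 dist_nonneg]
      · have hd : D ≤ dist x (p k') := by
          have := hR k' x hxy
          calc D ≤ dist (p k') z := hDk k'
          _ ≤ dist (p k') x := this
          _ = dist x (p k') := dist_comm _ _
        have : |F (p k') - F x| ≤ A * D := by
          rw [hx, hvy, sub_zero, abs_mul, abs_of_pos hD]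
          exact mul_le_mul_of_nonneg_right (hAle n') hD.le
        calc |F (p k') - F x| ≤ A * D := this
        _ ≤ A * dist x (p k') := mul_le_mul_of_nonneg_left hd hA0
    · rcases hchar y with hy | ⟨n', k', rfl, hvy⟩
      · have hd : D ≤ dist (p k) y := by
          have := hR k y (fun h => hxy h.symm)
          calc D ≤ dist (p k) z := hDk k
          _ ≤ dist (p k) y := this
        have : |F y - F (p k)| ≤ A * D := by
          rw [hy, hvx, zero_sub, abs_neg, abs_mul, abs_of_pos hD]
          exact mul_le_mul_of_nonneg_right (hAle n) hD.le
        calc |F y - F (p k)| ≤ A * D := this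
        _ ≤ A * dist (p k) y := mul_le_mul_of_nonneg_left hd hA0
      · have hkk : k ≠ k' := fun h => hxy (h ▸ rfl)
        have hd : 2 * D ≤ dist (p k) (p k') := hsep k k' hkk
        have hb : |F (p k') - F (p k)| ≤ A * (2 * D) := by
          rw [hvx, hvy]
          calc |a n' * D - a n * D| ≤ |a n' * D| + |a n * D| := abs_sub _ _
          _ = |a n'| * D + |a n| * D := by rw [abs_mul, abs_mul, abs_of_pos hD]
          _ ≤ A * D + A * D := add_le_add
              (mul_le_mul_of_nonneg_right (hAle n') hD.le)
              (mul_le_mul_of_nonneg_right (hAle n) hD.le)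
          _ = A * (2 * D) := by ring
        calc |F (p k') - F (p k)| ≤ A * (2 * D) := hb
        _ ≤ A * dist (p k) (p k') := mul_le_mul_of_nonneg_left hd hA0
  -- the sets for lipNorm and pnormAt
  set L : Set ℝ := {t : ℝ | ∃ u v : M, u ≠ v ∧ t = |F v - F u| / dist u v} with hLdef
  set P : Set ℝ := {t : ℝ | ∃ q : M, q ≠ z ∧ t = |F q - F z| / dist z q} with hPdef
  have hLbound : ∀ t ∈ L, t ≤ A := by
    rintro t ⟨u, v, huv, rfl⟩
    have hduv : 0 < dist u v := dist_pos.mpr huv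
    rw [div_le_iff₀ hduv]
    exact hLip u v huv
  have hPsubL : P ⊆ L := by
    rintro t ⟨q, hq, rfl⟩
    exact ⟨z, q, hq.symm, rfl⟩
  have hPne : P.Nonempty := ⟨_, p 0, hz 0, rfl⟩
  have hLne : L.Nonempty := hPne.mono hPsubL
  have hLbdd : BddAbove L := ⟨A, hLbound⟩
  have hPbdd : BddAbove P := hLbdd.mono hPsubL
  have hLA : sSup L ≤ A := csSup_le hLne hLbound
  -- A ≤ sSup P
  have hAP : A ≤ sSup P := by
    refine ciSup_le fun n => ?_
    have hpowtend : Tendsto (fun m : ℕ => r n ^ m) atTop atTop :=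
      tendsto_pow_atTop_atTop_of_one_lt (hrprime n).one_lt
    have hdtend : Tendsto (fun m : ℕ => dist (p (r n ^ m)) z) atTop (nhds D) :=
      hlim.comp hpowtend
    have hctend : Tendsto
        (fun m : ℕ => |F (p (r n ^ m)) - F z| / dist z (p (r n ^ m))) atTop
        (nhds (|a n|)) := by
      have h1 : Tendsto (fun m : ℕ => |a n| * D / dist (p (r n ^ m)) z) atTop
          (nhds (|a n| * D / D)) := tendsto_const_nhds.div hdtend hD.ne'
      rw [mul_div_assoc, div_self hD.ne', mul_one] at h1
      refine h1.congr' ?_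
      filter_upwards [eventually_ge_atTop 1] with m hm
      have hmem : p (r n ^ m) ∈ S n := ⟨m, hm, rfl⟩
      rw [hFval n _ hmem, hFzz, sub_zero, abs_mul, abs_of_pos hD, dist_comm]
    refine le_of_tendsto hctend ?_
    filter_upwards [eventually_ge_atTop 1] with m hm
    exact le_csSup hPbdd ⟨p (r n ^ m), hz _, rfl⟩
  have hPL : sSup P ≤ sSup L := csSup_le_csSup hLbdd hPne hPsubL
  have hLeq : sSup L = A := le_antisymm hLA (le_trans hAP hPL)
  have hPeq : sSup P = A := le_antisymm (le_trans hPL hLA) hAP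
  refine ⟨hsum, ?_, ?_⟩
  · show sSup _ = A
    convert hLeq using 2
  · show sSup _ = sSup _
    rw [show sSup {t : ℝ | ∃ q : M, q ≠ z ∧ t = |F q - F z| / dist z q} = sSup P from rfl]
    rw [hPeq]
    exact hLeq.symm
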